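/- For v ∈ R^3 with 0 < |v| < 1 and W₁, W₂: R^3 → R with |W_i(x)| ≤ C⟨x⟩^{−1}, the term F(x,t) = 10W₁³(x)W₂²(x−vt) + 10W₁²(x)W₂³(x−vt) belongs to L^1_t([1,∞); L^2_x(R^3)), and ∫_{t₁}^∞ ‖F(·,t)‖_{L^2(R^3)} dt ≤ C t₁^{−1/2} for t₁ ≥ 1. -/

import Mathlib

open MeasureTheory

noncomputable section

abbrev E3 := EuclideanSpace ℝ (Fin 3)

def jb (y : E3) : ℝ := Real.sqrt (1 + ‖y‖ ^ 2)

/-- The balanced interaction term `F(x,t) = 10W₁³(x)W₂²(x−vt) + 10W₁²(x)W₂³(x−vt)`. -/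
def Fterm (v : E3) (W₁ W₂ : E3 → ℝ) (x : E3) (t : ℝ) : ℝ :=
  10 * W₁ x ^ 3 * W₂ (x - t • v) ^ 2 + 10 * W₁ x ^ 2 * W₂ (x - t • v) ^ 3

lemma jb_nonneg (y : E3) : 0 ≤ jb y := Real.sqrt_nonneg _

lemma one_le_jb (y : E3) : 1 ≤ jb y := by
  have h : (1:ℝ) ≤ 1 + ‖y‖ ^ 2 := by nlinarith [sq_nonneg ‖y‖]
  calc (1:ℝ) = Real.sqrt 1 := by simp
    _ ≤ jb y := Real.sqrt_le_sqrt h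

lemma jb_pos (y : E3) : 0 < jb y := lt_of_lt_of_le one_pos (one_le_jb y)

lemma norm_le_jb (y : E3) : ‖y‖ ≤ jb y := by
  rw [show ‖y‖ = Real.sqrt (‖y‖ ^ 2) by rw [Real.sqrt_sq (norm_nonneg y)]]
  exact Real.sqrt_le_sqrt (by linarith)

lemma jb_inv_le_one (y : E3) : (jb y)⁻¹ ≤ 1 := by
  rw [inv_le_one_iff₀]; right; exact one_le_jb y

lemma jb_inv_nonneg (y : E3) : 0 ≤ (jb y)⁻¹ := inv_nonneg.2 (jb_nonneg y)

lemma continuous_jb : Continuous jb := by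
  unfold jb; fun_prop

/-- Key pointwise inequality. -/
lemma key_ineq {a b s : ℝ} (ha0 : 0 ≤ a) (ha1 : a ≤ 1) (hb0 : 0 ≤ b) (hb1 : b ≤ 1)
    (hs : 0 < s) (h : b ≤ s⁻¹ ∨ a ≤ s⁻¹) :
    a ^ 6 * b ^ 4 + a ^ 4 * b ^ 6 ≤ 2 * s⁻¹ ^ 4 * (a ^ 4 + b ^ 4) := by
  have hsi : 0 ≤ s⁻¹ := inv_nonneg.2 hs.le
  rcases h with h | h
  · have h1 : a ^ 6 * b ^ 4 ≤ s⁻¹ ^ 4 * a ^ 4 := by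
      have e1 : a ^ 6 ≤ a ^ 4 := pow_le_pow_of_le_one ha0 ha1 (by norm_num)
      have e2 : b ^ 4 ≤ s⁻¹ ^ 4 := pow_le_pow_left₀ hb0 h 4
      calc a ^ 6 * b ^ 4 ≤ a ^ 4 * s⁻¹ ^ 4 :=
            mul_le_mul e1 e2 (by positivity) (by positivity)
        _ = s⁻¹ ^ 4 * a ^ 4 := by ring
    have h2 : a ^ 4 * b ^ 6 ≤ s⁻¹ ^ 4 * a ^ 4 := by
      have e1 : b ^ 6 ≤ b ^ 4 := pow_le_pow_of_le_one hb0 hb1 (by norm_num)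
      have e2 : b ^ 4 ≤ s⁻¹ ^ 4 := pow_le_pow_left₀ hb0 h 4
      calc a ^ 4 * b ^ 6 ≤ a ^ 4 * s⁻¹ ^ 4 := by
            apply mul_le_mul_of_nonneg_left (e1.trans e2) (by positivity)
        _ = s⁻¹ ^ 4 * a ^ 4 := by ring
    nlinarith [mul_nonneg (pow_nonneg hsi 4) (pow_nonneg hb0 4)]
  · have h1 : a ^ 6 * b ^ 4 ≤ s⁻¹ ^ 4 * b ^ 4 := by
      have e1 : a ^ 6 ≤ a ^ 4 := pow_le_pow_of_le_one ha0 ha1 (by norm_num)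
      have e2 : a ^ 4 ≤ s⁻¹ ^ 4 := pow_le_pow_left₀ ha0 h 4
      exact mul_le_mul (e1.trans e2) le_rfl (by positivity) (by positivity)
    have h2 : a ^ 4 * b ^ 6 ≤ s⁻¹ ^ 4 * b ^ 4 := by
      have e1 : a ^ 4 ≤ s⁻¹ ^ 4 := pow_le_pow_left₀ ha0 h 4
      have e2 : b ^ 6 ≤ b ^ 4 := pow_le_pow_of_le_one hb0 hb1 (by norm_num)
      exact mul_le_mul e1 e2 (by positivity) (by positivity)
    nlinarith [mul_nonneg (pow_nonneg hsi 4) (pow_nonneg ha0 4)]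

/-- Pointwise bound on `Fterm` squared. -/
lemma Fterm_sq_le (v : E3) (hv0 : 0 < ‖v‖) (W₁ W₂ : E3 → ℝ) (C : ℝ) (hC : 0 ≤ C)
    (hW₁ : ∀ x : E3, |W₁ x| ≤ C * (jb x)⁻¹) (hW₂ : ∀ x : E3, |W₂ x| ≤ C * (jb x)⁻¹)
    (t : ℝ) (ht : 1 ≤ t) (x : E3) :
    Fterm v W₁ W₂ x t ^ 2 ≤
      (20 * C ^ 5 * (t * ‖v‖ / 2)⁻¹ ^ 2) ^ 2 *
        ((jb x)⁻¹ ^ 4 + (jb (x - t • v))⁻¹ ^ 4) := by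
  set a := (jb x)⁻¹ with ha
  set b := (jb (x - t • v))⁻¹ with hb
  set s := t * ‖v‖ / 2 with hsdef
  have ht0 : (0:ℝ) < t := lt_of_lt_of_le one_pos ht
  have hs : 0 < s := by positivity
  have ha0 : 0 ≤ a := jb_inv_nonneg x
  have ha1 : a ≤ 1 := jb_inv_le_one x
  have hb0 : 0 ≤ b := jb_inv_nonneg _
  have hb1 : b ≤ 1 := jb_inv_le_one _
  -- step 1 : |Fterm| ≤ 10 C^5 (a³b² + a²b³)
  have h1 : |W₁ x| ≤ C * a := hW₁ x
  have h2 : |W₂ (x - t • v)| ≤ C * b := hW₂ (x - t • v)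
  have hw1n : 0 ≤ |W₁ x| := abs_nonneg _
  have hw2n : 0 ≤ |W₂ (x - t • v)| := abs_nonneg _
  have step1 : |Fterm v W₁ W₂ x t| ≤ 10 * C ^ 5 * (a ^ 3 * b ^ 2 + a ^ 2 * b ^ 3) := by
    have eq1 : |10 * W₁ x ^ 3 * W₂ (x - t • v) ^ 2|
        = 10 * |W₁ x| ^ 3 * |W₂ (x - t • v)| ^ 2 := by
      rw [abs_mul, abs_mul, abs_pow, abs_pow]; norm_num
    have eq2 : |10 * W₁ x ^ 2 * W₂ (x - t • v) ^ 3|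
        = 10 * |W₁ x| ^ 2 * |W₂ (x - t • v)| ^ 3 := by
      rw [abs_mul, abs_mul, abs_pow, abs_pow]; norm_num
    calc |Fterm v W₁ W₂ x t|
        ≤ |10 * W₁ x ^ 3 * W₂ (x - t • v) ^ 2| + |10 * W₁ x ^ 2 * W₂ (x - t • v) ^ 3| :=
          abs_add_le _ _
      _ = 10 * |W₁ x| ^ 3 * |W₂ (x - t • v)| ^ 2 + 10 * |W₁ x| ^ 2 * |W₂ (x - t • v)| ^ 3 := by
          rw [eq1, eq2]
      _ ≤ 10 * (C * a) ^ 3 * (C * b) ^ 2 + 10 * (C * a) ^ 2 * (C * b) ^ 3 := by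
          gcongr <;> positivity
      _ = 10 * C ^ 5 * (a ^ 3 * b ^ 2 + a ^ 2 * b ^ 3) := by ring
  -- step 2 : geometry: b ≤ s⁻¹ or a ≤ s⁻¹
  have halt : b ≤ s⁻¹ ∨ a ≤ s⁻¹ := by
    have hnv : ‖t • v‖ = t * ‖v‖ := by
      rw [norm_smul, Real.norm_eq_abs, abs_of_pos ht0]
    rcases le_or_gt ‖x‖ s with hx | hx
    · left
      have hlow : t * ‖v‖ - ‖x‖ ≤ ‖x - t • v‖ := by
        have h := norm_sub_norm_le (t • v) x
        rw [hnv, norm_sub_rev] at h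
        linarith
      have hjb : s ≤ jb (x - t • v) := by
        refine le_trans ?_ (norm_le_jb _)
        rw [hsdef] at hx ⊢
        linarith
      exact inv_anti₀ hs hjb
    · right
      exact inv_anti₀ hs ((le_of_lt hx).trans (norm_le_jb _))
  have key := key_ineq ha0 ha1 hb0 hb1 hs halt
  -- step 3 : combine
  have habs : Fterm v W₁ W₂ x t ^ 2 = |Fterm v W₁ W₂ x t| ^ 2 := (sq_abs _).symm
  rw [habs]
  calc |Fterm v W₁ W₂ x t| ^ 2
      ≤ (10 * C ^ 5 * (a ^ 3 * b ^ 2 + a ^ 2 * b ^ 3)) ^ 2 :=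
        pow_le_pow_left₀ (abs_nonneg _) step1 2
    _ = 100 * C ^ 10 * (a ^ 3 * b ^ 2 + a ^ 2 * b ^ 3) ^ 2 := by ring
    _ ≤ 100 * C ^ 10 * (2 * (a ^ 6 * b ^ 4 + a ^ 4 * b ^ 6)) := by
        apply mul_le_mul_of_nonneg_left _ (by positivity)
        nlinarith [sq_nonneg (a ^ 3 * b ^ 2 - a ^ 2 * b ^ 3)]
    _ ≤ 100 * C ^ 10 * (2 * (2 * s⁻¹ ^ 4 * (a ^ 4 + b ^ 4))) := by
        apply mul_le_mul_of_nonneg_left _ (by positivity)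
        linarith
    _ = (20 * C ^ 5 * s⁻¹ ^ 2) ^ 2 * (a ^ 4 + b ^ 4) := by ring

/-- `F ∈ L¹_t([1,∞); L²_x(ℝ³))`, with tail `∫_{t₁}^∞ ‖F(·,t)‖_{L²} dt ≤ C t₁^{−1/2}`. -/
theorem stmt18 (v : E3) (hv0 : 0 < ‖v‖) (hv1 : ‖v‖ < 1)
    (W₁ W₂ : E3 → ℝ) (hW₁m : Measurable W₁) (hW₂m : Measurable W₂) (C : ℝ)
    (hW₁ : ∀ x : E3, |W₁ x| ≤ C * (jb x)⁻¹) (hW₂ : ∀ x : E3, |W₂ x| ≤ C * (jb x)⁻¹) :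
    (∫⁻ t in Set.Ici (1 : ℝ),
        eLpNorm (fun x : E3 => Fterm v W₁ W₂ x t) 2 volume) < ⊤ ∧
    ∃ C' : ℝ, 0 < C' ∧ ∀ t₁ : ℝ, 1 ≤ t₁ →
      (∫⁻ t in Set.Ici t₁, eLpNorm (fun x : E3 => Fterm v W₁ W₂ x t) 2 volume)
        ≤ ENNReal.ofReal (C' * t₁ ^ (-(1 : ℝ) / 2)) := by
  have hC : 0 ≤ C := by
    have h := hW₁ 0
    have hjb : jb (0 : E3) = 1 := by simp [jb]
    rw [hjb, inv_one, mul_one] at h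
    exact (abs_nonneg _).trans h
  -- the spatial L⁴-type integral
  set K : ENNReal := ∫⁻ x : E3, ENNReal.ofReal ((jb x)⁻¹ ^ 4) with hK
  have hjb4 : ∀ x : E3, (jb x)⁻¹ ^ 4 = ((1:ℝ) + ‖x‖ ^ 2) ^ (-(4:ℝ) / 2) := by
    intro x
    have h1 : (0:ℝ) ≤ 1 + ‖x‖ ^ 2 := by positivity
    have h2 : jb x ^ 4 = ((1:ℝ) + ‖x‖ ^ 2) ^ 2 := by
      rw [jb, show 4 = 2 * 2 from rfl, pow_mul, Real.sq_sqrt h1]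
    have h3 : ((1:ℝ) + ‖x‖ ^ 2) ^ (-(4:ℝ) / 2) = (((1:ℝ) + ‖x‖ ^ 2) ^ 2)⁻¹ := by
      rw [show (-(4:ℝ) / 2) = -((2:ℕ):ℝ) by norm_num, Real.rpow_neg h1, Real.rpow_natCast]
    rw [h3, inv_pow, h2]
  have hKlt : K < ⊤ := by
    have hint : Integrable (fun x : E3 => ((1:ℝ) + ‖x‖ ^ 2) ^ (-(4:ℝ) / 2)) volume :=
      integrable_rpow_neg_one_add_norm_sq (by simp; norm_num)
    have := hint.2
    rw [hK]
    calc (∫⁻ x : E3, ENNReal.ofReal ((jb x)⁻¹ ^ 4))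
        = ∫⁻ x : E3, ENNReal.ofReal (((1:ℝ) + ‖x‖ ^ 2) ^ (-(4:ℝ) / 2)) := by
          simp_rw [hjb4]
      _ ≤ ∫⁻ x : E3, ‖((1:ℝ) + ‖x‖ ^ 2) ^ (-(4:ℝ) / 2)‖₊ := by
          apply lintegral_mono
          intro x
          exact le_of_eq (Real.enorm_eq_ofReal (by positivity)).symm
      _ < ⊤ := hint.2
  -- measurability of the spatial integrand
  have hmeas : Measurable fun x : E3 => ENNReal.ofReal ((jb x)⁻¹ ^ 4) := by
    apply ENNReal.measurable_ofReal.comp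
    exact ((continuous_jb.inv₀ (fun x => (jb_pos x).ne')).pow 4).measurable
  -- constant for the L² bound
  set M : ℝ := ((2 * K) ^ ((1:ℝ)/2)).toReal with hM
  have hMnn : 0 ≤ M := ENNReal.toReal_nonneg
  set c₀ : ℝ := 20 * C ^ 5 * (2 / ‖v‖) ^ 2 with hc₀
  have hc₀nn : 0 ≤ c₀ := by positivity
  set B : ℝ := c₀ * M with hB
  have hBnn : 0 ≤ B := by positivity
  -- the main per-time L² bound
  have hL2 : ∀ t : ℝ, 1 ≤ t →
      eLpNorm (fun x : E3 => Fterm v W₁ W₂ x t) 2 volume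
        ≤ ENNReal.ofReal (B * t ^ (-2:ℝ)) := by
    intro t ht
    have ht0 : (0:ℝ) < t := lt_of_lt_of_le one_pos ht
    set s : ℝ := t * ‖v‖ / 2 with hs
    have hspos : 0 < s := by positivity
    set c : ℝ := 20 * C ^ 5 * s⁻¹ ^ 2 with hc
    have hcnn : 0 ≤ c := by positivity
    set G : E3 → ℝ :=
      fun x => c * Real.sqrt ((jb x)⁻¹ ^ 4 + (jb (x - t • v))⁻¹ ^ 4) with hG
    have hGnn : ∀ x, 0 ≤ G x := fun x => by
      apply mul_nonneg hcnn (Real.sqrt_nonneg _)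
    -- |F x| ≤ G x
    have hFG : ∀ x : E3, ‖Fterm v W₁ W₂ x t‖ ≤ ‖G x‖ := by
      intro x
      rw [Real.norm_eq_abs, Real.norm_eq_abs, abs_of_nonneg (hGnn x)]
      have hsq := Fterm_sq_le v hv0 W₁ W₂ C hC hW₁ hW₂ t ht x
      have : |Fterm v W₁ W₂ x t| = Real.sqrt (Fterm v W₁ W₂ x t ^ 2) :=
        (Real.sqrt_sq_eq_abs _).symm
      rw [this, hG]
      calc Real.sqrt (Fterm v W₁ W₂ x t ^ 2)
          ≤ Real.sqrt (c ^ 2 * ((jb x)⁻¹ ^ 4 + (jb (x - t • v))⁻¹ ^ 4)) :=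
            Real.sqrt_le_sqrt (by rw [hc]; exact hsq)
        _ = c * Real.sqrt ((jb x)⁻¹ ^ 4 + (jb (x - t • v))⁻¹ ^ 4) := by
            rw [Real.sqrt_mul (by positivity), Real.sqrt_sq hcnn]
    have hmono : eLpNorm (fun x : E3 => Fterm v W₁ W₂ x t) 2 volume ≤ eLpNorm G 2 volume :=
      eLpNorm_mono hFG
    -- compute eLpNorm of G
    have hGnorm : eLpNorm G 2 volume ≤ ENNReal.ofReal c * (2 * K) ^ ((1:ℝ)/2) := by
      rw [eLpNorm_eq_lintegral_rpow_enorm_toReal (by norm_num) (by norm_num)]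
      have htwor : (2 : ENNReal).toReal = (2:ℝ) := by norm_num
      rw [htwor]
      refine le_of_eq ?_
      have hpt : ∀ x : E3, ((‖G x‖₊ : ENNReal)) ^ (2:ℝ)
          = ENNReal.ofReal (c ^ 2) *
            (ENNReal.ofReal ((jb x)⁻¹ ^ 4) + ENNReal.ofReal ((jb (x - t • v))⁻¹ ^ 4)) := by
        intro x
        rw [show ((‖G x‖₊ : ENNReal)) = ENNReal.ofReal (G x) from Real.enorm_eq_ofReal (hGnn x), ENNReal.ofReal_rpow_of_nonneg (hGnn x)
          (by norm_num)]
        have : G x ^ (2:ℝ) = c ^ 2 * ((jb x)⁻¹ ^ 4 + (jb (x - t • v))⁻¹ ^ 4) := by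
          rw [Real.rpow_two]
          simp only [hG]
          rw [mul_pow, Real.sq_sqrt (by positivity)]
        rw [this, ENNReal.ofReal_mul (by positivity), ENNReal.ofReal_add (by positivity)
          (by positivity)]
      calc (∫⁻ x : E3, ((‖G x‖₊ : ENNReal)) ^ (2:ℝ)) ^ ((1:ℝ)/2)
          = (∫⁻ x : E3, ENNReal.ofReal (c ^ 2) *
              (ENNReal.ofReal ((jb x)⁻¹ ^ 4) +
                ENNReal.ofReal ((jb (x - t • v))⁻¹ ^ 4))) ^ ((1:ℝ)/2) := by
            congr 1; exact lintegral_congr hpt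
        _ = (ENNReal.ofReal (c ^ 2) * (2 * K)) ^ ((1:ℝ)/2) := by
            congr 1
            rw [lintegral_const_mul _ (by
              apply Measurable.add hmeas
              exact hmeas.comp (measurable_id.sub_const (t • v)))]
            congr 1
            rw [lintegral_add_left hmeas]
            have : (∫⁻ x : E3, ENNReal.ofReal ((jb (x - t • v))⁻¹ ^ 4)) = K := by
              rw [hK]
              exact lintegral_sub_right_eq_self
                (fun y => ENNReal.ofReal ((jb y)⁻¹ ^ 4)) (t • v)
            rw [this, hK, two_mul]
        _ = ENNReal.ofReal (c ^ 2) ^ ((1:ℝ)/2) * (2 * K) ^ ((1:ℝ)/2) := by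
            rw [ENNReal.mul_rpow_of_nonneg _ _ (by norm_num)]
        _ = ENNReal.ofReal c * (2 * K) ^ ((1:ℝ)/2) := by
            congr 1
            rw [ENNReal.ofReal_rpow_of_nonneg (by positivity) (by norm_num)]
            congr 1
            rw [← Real.rpow_natCast c 2, ← Real.rpow_mul hcnn]
            norm_num
    -- put it together
    have h2K : (2 * K) ^ ((1:ℝ)/2) = ENNReal.ofReal M := by
      rw [hM, ENNReal.ofReal_toReal]
      apply ENNReal.rpow_ne_top_of_nonneg (by norm_num)
      exact (ENNReal.mul_lt_top (by norm_num) hKlt).ne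
    have hcB : c * M ≤ B * t ^ (-2:ℝ) := by
      have hveq : c = c₀ * t ^ (-2:ℝ) := by
        have ht2 : t ^ (-2:ℝ) = (t ^ 2)⁻¹ := by
          rw [show (-2:ℝ) = -(2:ℝ) by norm_num, Real.rpow_neg ht0.le, Real.rpow_two]
        rw [hc, hc₀, hs, ht2]
        field_simp
      rw [hveq, hB]; ring_nf; rfl
    calc eLpNorm (fun x : E3 => Fterm v W₁ W₂ x t) 2 volume
        ≤ eLpNorm G 2 volume := hmono
      _ ≤ ENNReal.ofReal c * (2 * K) ^ ((1:ℝ)/2) := hGnorm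
      _ = ENNReal.ofReal (c * M) := by rw [h2K, ← ENNReal.ofReal_mul hcnn]
      _ ≤ ENNReal.ofReal (B * t ^ (-2:ℝ)) := ENNReal.ofReal_le_ofReal hcB
  -- integrate the bound in time
  have hmain : ∀ t₁ : ℝ, 1 ≤ t₁ →
      (∫⁻ t in Set.Ici t₁, eLpNorm (fun x : E3 => Fterm v W₁ W₂ x t) 2 volume)
        ≤ ENNReal.ofReal (B * t₁ ^ (-(1:ℝ))) := by
    intro t₁ ht₁
    have ht₁0 : (0:ℝ) < t₁ := lt_of_lt_of_le one_pos ht₁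
    have hbd : (∫⁻ t in Set.Ici t₁, eLpNorm (fun x : E3 => Fterm v W₁ W₂ x t) 2 volume)
        ≤ ∫⁻ t in Set.Ici t₁, ENNReal.ofReal (B * t ^ (-2:ℝ)) := by
      apply setLIntegral_mono' measurableSet_Ici
      intro t ht
      exact hL2 t (le_trans ht₁ ht)
    have hIoi : (∫⁻ t in Set.Ici t₁, ENNReal.ofReal (B * t ^ (-2:ℝ)))
        = ∫⁻ t in Set.Ioi t₁, ENNReal.ofReal (B * t ^ (-2:ℝ)) := by
      rw [← setLIntegral_congr (Ioi_ae_eq_Ici (μ := volume) (a := t₁))]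
    have hint : IntegrableOn (fun t : ℝ => B * t ^ (-2:ℝ)) (Set.Ioi t₁) volume :=
      (integrableOn_Ioi_rpow_of_lt (by norm_num) ht₁0).const_mul B
    have hval : (∫ t in Set.Ioi t₁, B * t ^ (-2:ℝ)) = B * t₁ ^ (-(1:ℝ)) := by
      rw [MeasureTheory.integral_const_mul, integral_Ioi_rpow_of_lt (by norm_num) ht₁0]
      norm_num
    have hnn : 0 ≤ᵐ[volume.restrict (Set.Ioi t₁)] fun t' : ℝ => B * t' ^ (-2:ℝ) := by
      filter_upwards [ae_restrict_mem measurableSet_Ioi] with t' ht'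
      have ht'0 : (0:ℝ) < t' := lt_trans ht₁0 ht'
      positivity
    have hofReal : (∫⁻ t in Set.Ioi t₁, ENNReal.ofReal (B * t ^ (-2:ℝ)))
        = ENNReal.ofReal (∫ t in Set.Ioi t₁, B * t ^ (-2:ℝ)) :=
      (ofReal_integral_eq_lintegral_ofReal hint hnn).symm
    calc (∫⁻ t in Set.Ici t₁, eLpNorm (fun x : E3 => Fterm v W₁ W₂ x t) 2 volume)
        ≤ ∫⁻ t in Set.Ici t₁, ENNReal.ofReal (B * t ^ (-2:ℝ)) := hbd
      _ = ENNReal.ofReal (B * t₁ ^ (-(1:ℝ))) := by rw [hIoi, hofReal, hval]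
  constructor
  · exact lt_of_le_of_lt (hmain 1 le_rfl) ENNReal.ofReal_lt_top
  · refine ⟨B + 1, by positivity, fun t₁ ht₁ => ?_⟩
    have ht₁0 : (0:ℝ) < t₁ := lt_of_lt_of_le one_pos ht₁
    refine (hmain t₁ ht₁).trans (ENNReal.ofReal_le_ofReal ?_)
    have h1 : t₁ ^ (-(1:ℝ)) ≤ t₁ ^ (-(1:ℝ)/2) :=
      Real.rpow_le_rpow_of_exponent_le ht₁ (by norm_num)
    have h2 : 0 ≤ t₁ ^ (-(1:ℝ)) := Real.rpow_nonneg ht₁0.le _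
    nlinarith [Real.rpow_nonneg ht₁0.le (-(1:ℝ)/2)]

end
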